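/- Let (p, a, b) be a Markov triple with p > a and p > b, and let u be an integer with 0 < u < p/2 satisfying b ≡ u·a (mod p) or b ≡ -u·a (mod p). Then u² ≡ -1 (mod p). -/
import Mathlib

lemma markov_le_helper (x y z : ℕ) (hy : 0 < y) (hz : 0 < z)
    (h3 : x ^ 2 ≤ y ^ 2 + z ^ 2) : x ≤ y * z := by
  by_contra hc
  push_neg at hc
  zify at h3 hc hy hz
  have h4 : ((y:ℤ) * z + 1) ≤ x := hc
  have h5 : ((y:ℤ) * z + 1) ^ 2 ≤ (x:ℤ) ^ 2 := pow_le_pow_left₀ (by positivity) h4 2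
  have h6 : (0:ℤ) ≤ ((y:ℤ) ^ 2 - 1) * ((z:ℤ) ^ 2 - 1) :=
    mul_nonneg (by nlinarith) (by nlinarith)
  nlinarith

lemma markov_descent_step (n x y z : ℕ) (hx : 0 < x) (hy : 0 < y) (hz : 0 < z)
    (heq : x ^ 2 + y ^ 2 + z ^ 2 = n * x * y * z) (hgt : x ^ 2 + y ^ 2 < z ^ 2) :
    ∃ z', 0 < z' ∧ z' < z ∧ x ^ 2 + y ^ 2 + z' ^ 2 = n * x * y * z' := by
  have hzlt : z < n * x * y := by nlinarith
  refine ⟨n * x * y - z, ?_, ?_, ?_⟩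
  · omega
  · zify [hzlt.le]; nlinarith
  · zify [hzlt.le]; nlinarith

lemma markov_no_sol (n : ℕ) (hn : 4 ≤ n) :
    ∀ x y z : ℕ, 0 < x → 0 < y → 0 < z → x ^ 2 + y ^ 2 + z ^ 2 = n * x * y * z → False := by
  suffices H : ∀ s : ℕ, ∀ x y z : ℕ, x + y + z ≤ s → 0 < x → 0 < y → 0 < z →
      x ^ 2 + y ^ 2 + z ^ 2 = n * x * y * z → False by
    intro x y z hx hy hz heq
    exact H (x + y + z) x y z le_rfl hx hy hz heq
  intro s
  induction s with
  | zero => intro x y z hs hx hy hz _; omega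
  | succ s ih =>
    intro x y z hs hx hy hz heq
    rcases lt_or_ge (x ^ 2 + y ^ 2) (z ^ 2) with h1 | h1
    · obtain ⟨z', hz'0, hz'lt, heq'⟩ := markov_descent_step n x y z hx hy hz heq h1
      exact ih x y z' (by omega) hx hy hz'0 heq'
    rcases lt_or_ge (x ^ 2 + z ^ 2) (y ^ 2) with h2 | h2
    · obtain ⟨y', hy'0, hy'lt, heq'⟩ :=
        markov_descent_step n x z y hx hz hy (by linarith [heq]) h2
      exact ih x y' z (by omega) hx hy'0 hz (by linarith [heq'])
    rcases lt_or_ge (y ^ 2 + z ^ 2) (x ^ 2) with h3 | h3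
    · obtain ⟨x', hx'0, hx'lt, heq'⟩ :=
        markov_descent_step n y z x hy hz hx (by linarith [heq]) h3
      exact ih x' y z (by omega) hx'0 hy hz (by linarith [heq'])
    have hxyz : x ≤ y * z := markov_le_helper x y z hy hz h3
    have hyxz : y ≤ x * z := markov_le_helper y x z hx hz h2
    have hzxy : z ≤ x * y := markov_le_helper z x y hx hy h1
    have e1 : x * x ≤ x * (y * z) := Nat.mul_le_mul_left x hxyz
    have e2 : y * y ≤ y * (x * z) := Nat.mul_le_mul_left y hyxz
    have e3 : z * z ≤ z * (x * y) := Nat.mul_le_mul_left z hzxy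
    have hpos : 0 < x * y * z := by positivity
    nlinarith

lemma markov_coprime (p a b : ℕ) (hp : 0 < p) (ha : 0 < a) (hb : 0 < b)
    (hM : p ^ 2 + a ^ 2 + b ^ 2 = 3 * p * a * b) : Nat.Coprime p a := by
  rw [Nat.Coprime]
  by_contra hg
  obtain ⟨q, hq, hqd⟩ := Nat.exists_prime_and_dvd hg
  have hqp : q ∣ p := hqd.trans (Nat.gcd_dvd_left p a)
  have hqa : q ∣ a := hqd.trans (Nat.gcd_dvd_right p a)
  have hqb2 : q ∣ b ^ 2 := by
    have h1 : q ∣ 3 * p * a * b := ((dvd_mul_of_dvd_right hqp 3).mul_right a).mul_right b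
    have h2 : q ∣ p ^ 2 + a ^ 2 := dvd_add (dvd_pow hqp two_ne_zero) (dvd_pow hqa two_ne_zero)
    have h3 : b ^ 2 = 3 * p * a * b - (p ^ 2 + a ^ 2) := by omega
    rw [h3]
    exact Nat.dvd_sub (hM ▸ h1) h2
  have hqb : q ∣ b := hq.dvd_of_dvd_pow hqb2
  obtain ⟨P, hP⟩ := hqp
  obtain ⟨A, hA⟩ := hqa
  obtain ⟨B, hB⟩ := hqb
  have hq2 : 2 ≤ q := hq.two_le
  subst hP hA hB
  have hP0 : 0 < P := Nat.pos_of_ne_zero (fun h => by simp [h] at hp)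
  have hA0 : 0 < A := Nat.pos_of_ne_zero (fun h => by simp [h] at ha)
  have hB0 : 0 < B := Nat.pos_of_ne_zero (fun h => by simp [h] at hb)
  have key : P ^ 2 + A ^ 2 + B ^ 2 = (3 * q) * P * A * B := by
    have h2 : q ^ 2 * (P ^ 2 + A ^ 2 + B ^ 2) = q ^ 2 * ((3 * q) * P * A * B) := by
      ring_nf; ring_nf at hM; linarith
    exact Nat.eq_of_mul_eq_mul_left (by positivity) h2
  exact markov_no_sol (3 * q) (by omega) P A B hP0 hA0 hB0 key

theorem markov_characteristic_number_sq (p a b : ℕ) (u : ℤ)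
    (hp : 0 < p) (ha : 0 < a) (hb : 0 < b)
    (hM : p ^ 2 + a ^ 2 + b ^ 2 = 3 * p * a * b)
    (hpa : a < p) (hpb : b < p)
    (hu0 : 0 < u) (hu2 : 2 * u < (p : ℤ))
    (hcong : (b : ℤ) ≡ u * a [ZMOD (p : ℤ)] ∨ (b : ℤ) ≡ -u * a [ZMOD (p : ℤ)]) :
    u ^ 2 ≡ -1 [ZMOD (p : ℤ)] := by
  have hMZ : ((p:ℤ)) ^ 2 + (a:ℤ) ^ 2 + (b:ℤ) ^ 2 = 3 * p * a * b := by exact_mod_cast hM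
  have hdvd : (p:ℤ) ∣ (a:ℤ) ^ 2 + (b:ℤ) ^ 2 := ⟨3 * a * b - p, by linarith⟩
  have hb2 : (b:ℤ) ^ 2 ≡ (u * a) ^ 2 [ZMOD (p:ℤ)] := by
    rcases hcong with h | h
    · exact h.pow 2
    · have := h.pow 2
      rwa [show (-u * (a:ℤ)) ^ 2 = (u * a) ^ 2 by ring] at this
  have hdvd2 : (p:ℤ) ∣ (u ^ 2 + 1) * (a:ℤ) ^ 2 := by
    have h1 : (p:ℤ) ∣ (u * a) ^ 2 - (b:ℤ) ^ 2 := (Int.ModEq.dvd hb2)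
    have h2 : (u ^ 2 + 1) * (a:ℤ) ^ 2 = ((u * a) ^ 2 - (b:ℤ) ^ 2) + ((a:ℤ) ^ 2 + (b:ℤ) ^ 2) := by
      ring
    rw [h2]
    exact dvd_add h1 hdvd
  have hcop : IsCoprime ((p:ℤ)) ((a:ℤ) ^ 2) := by
    have : Nat.Coprime p a := markov_coprime p a b hp ha hb hM
    exact (Nat.isCoprime_iff_coprime.mpr this).pow_right
  have hfin : (p:ℤ) ∣ u ^ 2 + 1 := hcop.dvd_of_dvd_mul_right hdvd2
  obtain ⟨k, hk⟩ := hfin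
  exact Int.ModEq.symm (Int.modEq_iff_dvd.mpr ⟨k, by linarith⟩)
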